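/- If Θ: (0,∞) → (0,∞) is differentiable, r ↦ Θ(e^r) is convex and increasing, Θ(x) → 0 as x → 0+, then Θ₁(x) = xΘ'(x) + Θ(x) tends to 0 as x → 0+. -/

import Mathlib

open Real Set Filter

theorem theta1_tendsto_zero
    (Θ : ℝ → ℝ)
    (hdiff : DifferentiableOn ℝ Θ (Set.Ioi 0))
    (hpos : ∀ x ∈ Set.Ioi (0 : ℝ), 0 < Θ x)
    (hmono : Monotone (fun r : ℝ => Θ (Real.exp r)))
    (hconv : ConvexOn ℝ Set.univ (fun r : ℝ => Θ (Real.exp r)))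
    (hzero : Filter.Tendsto Θ (nhdsWithin 0 (Set.Ioi 0)) (nhds 0)) :
    Filter.Tendsto (fun x : ℝ => x * deriv Θ x + Θ x)
      (nhdsWithin 0 (Set.Ioi 0)) (nhds 0) := by
  set g : ℝ → ℝ := fun r : ℝ => Θ (Real.exp r) with hg
  -- key bounds for t > 0
  have key : ∀ t : ℝ, 0 < t →
      0 ≤ t * deriv Θ t ∧ t * deriv Θ t ≤ Θ (Real.exp 1 * t) - Θ t := by
    intro t ht
    set r := Real.log t with hr
    have hexp : Real.exp r = t := Real.exp_log ht
    have hΘt : DifferentiableAt ℝ Θ t :=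
      (hdiff t ht).differentiableAt (isOpen_Ioi.mem_nhds ht)
    have hgd : HasDerivAt g (deriv Θ t * Real.exp r) r := by
      have := HasDerivAt.comp r (hexp ▸ hΘt.hasDerivAt) (Real.hasDerivAt_exp r)
      simpa [hg, hexp, Function.comp_def] using this
    have hupper := hconv.le_slope_of_hasDerivAt (mem_univ r) (mem_univ (r + 1))
      (lt_add_one r) hgd
    have hlower := hconv.slope_le_of_hasDerivAt (mem_univ (r - 1)) (mem_univ r)
      (by linarith) hgd
    have hs1 : slope g r (r + 1) = Θ (Real.exp 1 * t) - Θ t := by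
      rw [slope_def_field]
      simp [hg, Real.exp_add, hexp, mul_comm]
    have hs2 : slope g (r - 1) r = Θ t - Θ (Real.exp (r - 1)) := by
      rw [slope_def_field]
      simp [hg, hexp]
    have hmonoΘ : 0 ≤ Θ t - Θ (Real.exp (r - 1)) := by
      have := hmono (show r - 1 ≤ r by linarith)
      simpa [hg, hexp] using sub_nonneg.2 this
    rw [hexp] at hupper hlower
    constructor
    · have := hs2 ▸ hlower
      nlinarith
    · have := hs1 ▸ hupper
      nlinarith
  -- squeeze
  have hup : Filter.Tendsto (fun t : ℝ => Θ (Real.exp 1 * t))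
      (nhdsWithin 0 (Set.Ioi 0)) (nhds 0) := by
    apply hzero.comp
    apply tendsto_nhdsWithin_of_tendsto_nhds_of_eventually_within
    · have : Filter.Tendsto (fun t : ℝ => Real.exp 1 * t) (nhds 0) (nhds 0) := by
        simpa using (tendsto_id.const_mul (Real.exp 1) : Filter.Tendsto _ (nhds (0:ℝ)) _)
      exact this.mono_left nhdsWithin_le_nhds
    · filter_upwards [self_mem_nhdsWithin] with t (ht : (0:ℝ) < t)
      exact mul_pos (Real.exp_pos 1) ht
  refine tendsto_of_tendsto_of_tendsto_of_le_of_le' hzero hup ?_ ?_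
  · filter_upwards [self_mem_nhdsWithin] with t (ht : (0:ℝ) < t)
    have := (key t ht).1
    linarith
  · filter_upwards [self_mem_nhdsWithin] with t (ht : (0:ℝ) < t)
    have := (key t ht).2
    linarith
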